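/- Let T > 0, k ≥ 0, m ≥ 0 be real-valued continuous functions on a measurable set V ⊂ ℝ³, let ∇T and ∇μ be continuous vector fields, let μ_vis ≥ 0 be a continuous function, and let A be a continuous 3×3-matrix-valued field with τ = μ_vis(A + Aᵀ) − (2/3)μ_vis(tr A)I. Then the entropy production S_inc = ∫_V { k |∇T|²/T² + (τ : A)/T + m |∇μ|²/T } dx is nonnegative. -/
import Mathlib


noncomputable section
open scoped BigOperators
open MeasureTheory

/-- Euclidean dot product on `ℝ³`. -/
def dot3 (a b : Fin 3 → ℝ) : ℝ := ∑ i, a i * b i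

/-- **Nonnegativity of the entropy production.** For continuous fields
`T > 0`, `k ≥ 0`, `m ≥ 0`, `μ_vis ≥ 0` on a measurable `V ⊂ ℝ³`, continuous
vector fields `∇T`, `∇μ`, and a continuous matrix field `A` with deviatoric
stress `τ = μ_vis(A + Aᵀ) − (2/3)μ_vis(tr A)I`, the entropy production
`S_inc = ∫_V { k|∇T|²/T² + (τ:A)/T + m|∇μ|²/T } dx` is nonnegative. -/
theorem entropy_production_nonneg
    (V : Set (Fin 3 → ℝ)) (hV : MeasurableSet V)
    (T k m μvis : (Fin 3 → ℝ) → ℝ)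
    (hT : ContinuousOn T V) (hk : ContinuousOn k V)
    (hm : ContinuousOn m V) (hμvis : ContinuousOn μvis V)
    (hTpos : ∀ x ∈ V, 0 < T x) (hk0 : ∀ x ∈ V, 0 ≤ k x)
    (hm0 : ∀ x ∈ V, 0 ≤ m x) (hμ0 : ∀ x ∈ V, 0 ≤ μvis x)
    (gT gμ : (Fin 3 → ℝ) → Fin 3 → ℝ)
    (hgT : ∀ i, ContinuousOn (fun x => gT x i) V)
    (hgμ : ∀ i, ContinuousOn (fun x => gμ x i) V)
    (A : (Fin 3 → ℝ) → Fin 3 → Fin 3 → ℝ)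
    (hA : ∀ i j, ContinuousOn (fun x => A x i j) V)
    (τ : (Fin 3 → ℝ) → Fin 3 → Fin 3 → ℝ)
    (hτ : ∀ x i j, τ x i j
      = μvis x * (A x i j + A x j i)
        - (2 / 3) * μvis x * (∑ l, A x l l) * (if i = j then 1 else 0)) :
    0 ≤ ∫ x in V,
        (k x * dot3 (gT x) (gT x) / (T x) ^ 2
          + (∑ i, ∑ j, τ x i j * A x i j) / T x
          + m x * dot3 (gμ x) (gμ x) / T x) := by
  apply MeasureTheory.setIntegral_nonneg hV
  intro x hx
  have hT' := hTpos x hx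
  have hdot : ∀ v : Fin 3 → ℝ, 0 ≤ dot3 v v := by
    intro v
    exact Finset.sum_nonneg fun i _ => mul_self_nonneg _
  have hτA : 0 ≤ ∑ i, ∑ j, τ x i j * A x i j := by
    have h := hμ0 x hx
    simp only [hτ, Fin.sum_univ_three]
    norm_num [Fin.ext_iff]
    nlinarith [sq_nonneg (A x 0 1 + A x 1 0), sq_nonneg (A x 0 2 + A x 2 0),
      sq_nonneg (A x 1 2 + A x 2 1), sq_nonneg (A x 0 0 - A x 1 1),
      sq_nonneg (A x 1 1 - A x 2 2), sq_nonneg (A x 0 0 - A x 2 2),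
      mul_nonneg h (sq_nonneg (A x 0 1 + A x 1 0)),
      mul_nonneg h (sq_nonneg (A x 0 2 + A x 2 0)),
      mul_nonneg h (sq_nonneg (A x 1 2 + A x 2 1)),
      mul_nonneg h (sq_nonneg (A x 0 0 - A x 1 1)),
      mul_nonneg h (sq_nonneg (A x 1 1 - A x 2 2)),
      mul_nonneg h (sq_nonneg (A x 0 0 - A x 2 2))]
  have h1 : 0 ≤ k x * dot3 (gT x) (gT x) / (T x) ^ 2 :=
    div_nonneg (mul_nonneg (hk0 x hx) (hdot _)) (by positivity)
  have h2 : 0 ≤ (∑ i, ∑ j, τ x i j * A x i j) / T x :=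
    div_nonneg hτA hT'.le
  have h3 : 0 ≤ m x * dot3 (gμ x) (gμ x) / T x :=
    div_nonneg (mul_nonneg (hm0 x hx) (hdot _)) hT'.le
  linarith
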